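/- (Lemma 1) Let Γ be a finite nonempty set, Δ : Γ → Γ → ℤ a matrix with det Δ ≠ 0, ∂Γ ⊆ Γ and Γ° = Γ \ ∂Γ. Suppose the sandpile group G(Γ) = ℤ^Γ/Δ(ℤ^Γ) is generated by the classes of the delta functions δ_v for v ∈ ∂Γ (i.e. it is generated by adding sand at the boundary). Then the extended sandpile group G̃(Γ) := (ℤ^{Γ°} × ℝ^{∂Γ}) / Δ̃(ℤ^Γ), where Δ̃(f) = ((Δf)|_{Γ°}, (Δf)|_{∂Γ} viewed as real-valued), is isomorphic as an abelian group to the quotient H_ℝ(Γ)/H_ℤ(Γ) of real-valued harmonic functions by the image of the integer-valued harmonic functions. -/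

import Mathlib

open scoped BigOperators

/-- The homomorphism `Δ ⊗ A : A^Γ → A^Γ` induced by an integer matrix `Δ`. -/
def lapHom {Γ : Type} [Fintype Γ] (Δ : Matrix Γ Γ ℤ) (A : Type) [AddCommGroup A] :
    (Γ → A) →+ (Γ → A) where
  toFun f v := ∑ w, Δ v w • f w
  map_zero' := by funext v; simp
  map_add' f g := by funext v; simp [smul_add, Finset.sum_add_distrib]

/-- `Δ° ⊗ A : A^Γ → A^{Γ°}`: the Laplacian followed by restriction to the
interior `Γ° = Γ \ ∂Γ` (here `B` is the boundary `∂Γ`). -/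
def lapIntHom {Γ : Type} [Fintype Γ] (Δ : Matrix Γ Γ ℤ) (B : Set Γ)
    (A : Type) [AddCommGroup A] : (Γ → A) →+ ({v : Γ // v ∉ B} → A) where
  toFun f v := ∑ w, Δ v.1 w • f w
  map_zero' := by funext v; simp
  map_add' f g := by funext v; simp [smul_add, Finset.sum_add_distrib]

/-- `Δ̃ : ℤ^Γ → ℤ^{Γ°} × ℝ^{∂Γ}`. -/
def extLap {Γ : Type} [Fintype Γ] (Δ : Matrix Γ Γ ℤ) (B : Set Γ) :
    (Γ → ℤ) →+ (({v : Γ // v ∉ B} → ℤ) × ({v : Γ // v ∈ B} → ℝ)) where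
  toFun f := (fun v => ∑ w, Δ v.1 w * f w, fun v => ∑ w, (Δ v.1 w : ℝ) * (f w : ℝ))
  map_zero' := by refine Prod.ext ?_ ?_ <;> funext v <;> simp
  map_add' f g := by
    refine Prod.ext ?_ ?_ <;> funext v <;> simp [mul_add, Finset.sum_add_distrib]

/-- The inclusion `ℤ^Γ → ℝ^Γ`. -/
def intCastHom (Γ : Type) : (Γ → ℤ) →+ (Γ → ℝ) where
  toFun f v := (f v : ℝ)
  map_zero' := by funext v; simp
  map_add' f g := by funext v; simp

set_option linter.unusedSectionVars false

section Aux
variable {Γ : Type} [Fintype Γ] [DecidableEq Γ] (Δ : Matrix Γ Γ ℤ) (B : Set Γ)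

noncomputable def ARm : Matrix Γ Γ ℝ := Δ.map (fun n : ℤ => (n : ℝ))

lemma ARm_mulVec (f : Γ → ℝ) (v : Γ) : (ARm Δ).mulVec f v = ∑ w, (Δ v w : ℝ) * f w := by
  simp [ARm, Matrix.mulVec, dotProduct, Matrix.map]

lemma ARm_det_isUnit (hΔ : Δ.det ≠ 0) : IsUnit (ARm Δ).det := by
  have : (ARm Δ).det = ((Δ.det : ℤ) : ℝ) := ((Int.castRingHom ℝ).map_det Δ).symm
  rw [this]
  exact isUnit_iff_ne_zero.2 (by exact_mod_cast hΔ)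

lemma ARm_inj (hΔ : Δ.det ≠ 0) : Function.Injective (ARm Δ).mulVec := by
  intro f g h
  have := congrArg (ARm Δ)⁻¹.mulVec h
  rwa [Matrix.mulVec_mulVec, Matrix.mulVec_mulVec, Matrix.nonsing_inv_mul _ (ARm_det_isUnit Δ hΔ),
    Matrix.one_mulVec, Matrix.one_mulVec] at this

lemma ARm_surj (hΔ : Δ.det ≠ 0) : Function.Surjective (ARm Δ).mulVec := by
  intro c
  exact ⟨(ARm Δ)⁻¹.mulVec c, by
    rw [Matrix.mulVec_mulVec, Matrix.mul_nonsing_inv _ (ARm_det_isUnit Δ hΔ), Matrix.one_mulVec]⟩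

/-- the boundary-values map from real harmonic functions to the extended group -/
noncomputable def PsiHom : ↥(lapIntHom Δ B ℝ).ker →+
    (({v : Γ // v ∉ B} → ℤ) × ({v : Γ // v ∈ B} → ℝ)) :=
  AddMonoidHom.mk' (fun f => (0, fun v => ∑ w, (Δ v.1 w : ℝ) * f.1 w)) (by
    intro f g
    refine Prod.ext (by simp) ?_
    funext v
    simp [mul_add, Finset.sum_add_distrib])

noncomputable def PhiHom : ↥(lapIntHom Δ B ℝ).ker →+
    ((({v : Γ // v ∉ B} → ℤ) × ({v : Γ // v ∈ B} → ℝ)) ⧸ (extLap Δ B).range) :=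
  (QuotientAddGroup.mk' (extLap Δ B).range).comp (PsiHom Δ B)

/-- the generation hypothesis gives surjectivity of `Δ°` over `ℤ` -/
lemma gen_surj
    (hgen : AddSubgroup.closure
      {x : (Γ → ℤ) ⧸ (lapHom Δ ℤ).range |
        ∃ v ∈ B, x = QuotientAddGroup.mk (Pi.single v (1 : ℤ))} = ⊤)
    (a : {v : Γ // v ∉ B} → ℤ) :
    ∃ g : Γ → ℤ, ∀ (v : Γ) (hv : v ∉ B), ∑ w, Δ v w * g w = a ⟨v, hv⟩ := by
  classical
  set R := (lapHom Δ ℤ).range with hR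
  set S0 : Set (Γ → ℤ) := {f | ∃ v ∈ B, f = Pi.single v 1} with hS0
  have himg : (QuotientAddGroup.mk' R) '' S0 =
      {x : (Γ → ℤ) ⧸ R | ∃ v ∈ B, x = QuotientAddGroup.mk (Pi.single v (1 : ℤ))} := by
    ext x
    constructor
    · rintro ⟨f, ⟨v, hv, rfl⟩, rfl⟩; exact ⟨v, hv, rfl⟩
    · rintro ⟨v, hv, rfl⟩; exact ⟨Pi.single v 1, ⟨v, hv, rfl⟩, rfl⟩
  have hmap : (AddSubgroup.closure S0).map (QuotientAddGroup.mk' R) = ⊤ := by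
    rw [AddMonoidHom.map_closure, himg, hgen]
  -- the extension of a by zero
  set x : Γ → ℤ := fun v => if h : v ∈ B then 0 else a ⟨v, h⟩ with hx
  have hxmem : QuotientAddGroup.mk' R x ∈ (AddSubgroup.closure S0).map (QuotientAddGroup.mk' R) := by
    rw [hmap]; trivial
  obtain ⟨s, hs, hsx⟩ := hxmem
  rw [QuotientAddGroup.mk'_eq_mk'] at hsx
  obtain ⟨z, hz, hzx⟩ := hsx
  obtain ⟨g, hg⟩ := hz
  -- elements of closure S0 vanish outside B
  have hvan : ∀ f ∈ AddSubgroup.closure S0, ∀ v ∉ B, f v = 0 := by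
    intro f hf
    induction hf using AddSubgroup.closure_induction with
    | mem f hf =>
      obtain ⟨v, hv, rfl⟩ := hf
      intro w hw
      exact Pi.single_eq_of_ne (fun h : w = v => hw (h ▸ hv)) 1
    | zero => intro v _; rfl
    | add f g _ _ hf hg => intro v hv; simp [Pi.add_apply, hf v hv, hg v hv]
    | neg f _ hf => intro v hv; simp [Pi.neg_apply, hf v hv]
  refine ⟨g, fun v hv => ?_⟩
  have hxv : x v = a ⟨v, hv⟩ := by simp [hx, hv]
  have := congrFun hzx v
  rw [Pi.add_apply] at this
  rw [hvan s hs v hv, ← hg] at this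
  simpa [lapHom, hxv] using this

end Aux

section Main
variable {Γ : Type} [Fintype Γ] [DecidableEq Γ] (Δ : Matrix Γ Γ ℤ) (B : Set Γ)

lemma Phi_surj (hΔ : Δ.det ≠ 0)
    (hgen : AddSubgroup.closure
      {x : (Γ → ℤ) ⧸ (lapHom Δ ℤ).range |
        ∃ v ∈ B, x = QuotientAddGroup.mk (Pi.single v (1 : ℤ))} = ⊤) :
    Function.Surjective (PhiHom Δ B) := by
  classical
  intro q
  obtain ⟨⟨a, b⟩, rfl⟩ := QuotientAddGroup.mk_surjective q
  obtain ⟨g, hg⟩ := gen_surj Δ B hgen a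
  set c : Γ → ℝ := fun v => if h : v ∈ B then b ⟨v, h⟩ - ∑ w, (Δ v w : ℝ) * g w else 0 with hc
  obtain ⟨f, hf⟩ := ARm_surj Δ hΔ c
  have hfval : ∀ v : Γ, ∑ w, (Δ v w : ℝ) * f w = c v := by
    intro v
    rw [← ARm_mulVec, hf]
  have hfker : f ∈ (lapIntHom Δ B ℝ).ker := by
    rw [AddMonoidHom.mem_ker]
    funext v
    show ∑ w, Δ v.1 w • f w = 0
    have : ∑ w, Δ v.1 w • f w = ∑ w, (Δ v.1 w : ℝ) * f w := by
      simp [zsmul_eq_mul]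
    rw [this, hfval v.1, hc]
    simp [v.2]
  refine ⟨⟨f, hfker⟩, ?_⟩
  show QuotientAddGroup.mk' _ (PsiHom Δ B ⟨f, hfker⟩) = _
  rw [QuotientAddGroup.mk'_apply, QuotientAddGroup.eq]
  refine ⟨g, ?_⟩
  refine Prod.ext ?_ ?_
  · show (fun v : {v : Γ // v ∉ B} => ∑ w, Δ v.1 w * g w) = -(0 : {v : Γ // v ∉ B} → ℤ) + a
    funext v
    rw [hg v.1 v.2]
    simp
  · show (fun v : {v : Γ // v ∈ B} => ∑ w, (Δ v.1 w : ℝ) * (g w : ℝ)) =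
      -(fun v : {v : Γ // v ∈ B} => ∑ w, (Δ v.1 w : ℝ) * f w) + b
    funext v
    rw [Pi.add_apply, Pi.neg_apply, hfval v.1, hc]
    simp [v.2]

lemma Phi_ker (hΔ : Δ.det ≠ 0) : (PhiHom Δ B).ker =
    ((intCastHom Γ).comp (lapIntHom Δ B ℤ).ker.subtype).range.addSubgroupOf
      (lapIntHom Δ B ℝ).ker := by
  ext f
  rw [AddMonoidHom.mem_ker, AddSubgroup.mem_addSubgroupOf]
  have hf0 : ∀ v : {v : Γ // v ∉ B}, ∑ w, (Δ v.1 w : ℝ) * f.1 w = 0 := by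
    intro v
    have h := congrFun (f.2 : lapIntHom Δ B ℝ f.1 = 0) v
    simpa [lapIntHom, zsmul_eq_mul] using h
  constructor
  · intro h
    have hmem : PsiHom Δ B f ∈ (extLap Δ B).range := by
      rwa [PhiHom, AddMonoidHom.comp_apply, QuotientAddGroup.mk'_apply,
        QuotientAddGroup.eq_zero_iff] at h
    obtain ⟨g, hg⟩ := hmem
    have hg1 : ∀ v : {v : Γ // v ∉ B}, ∑ w, Δ v.1 w * g w = 0 := by
      intro v
      have := congrFun (congrArg Prod.fst hg) v
      simpa [extLap, PsiHom] using this
    have hg2 : ∀ v : {v : Γ // v ∈ B}, ∑ w, (Δ v.1 w : ℝ) * (g w : ℝ) =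
        ∑ w, (Δ v.1 w : ℝ) * f.1 w := by
      intro v
      have := congrFun (congrArg Prod.snd hg) v
      simpa [extLap, PsiHom] using this
    have hgker : g ∈ (lapIntHom Δ B ℤ).ker := by
      rw [AddMonoidHom.mem_ker]
      funext v
      show ∑ w, Δ v.1 w • g w = 0
      simpa [smul_eq_mul] using hg1 v
    have hcast : (fun v => ((g v : ℝ))) = f.1 := by
      apply ARm_inj Δ hΔ
      funext v
      rw [ARm_mulVec, ARm_mulVec]
      by_cases hv : v ∈ B
      · exact hg2 ⟨v, hv⟩
      · rw [hf0 ⟨v, hv⟩]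
        have : ((∑ w, Δ v w * g w : ℤ) : ℝ) = 0 := by rw [hg1 ⟨v, hv⟩]; simp
        push_cast at this
        exact this
    exact ⟨⟨g, hgker⟩, hcast⟩
  · rintro ⟨⟨g, hgker⟩, hcast⟩
    have hc : ∀ v, (g v : ℝ) = f.1 v := fun v => congrFun hcast v
    have hgk : ∀ v : {v : Γ // v ∉ B}, ∑ w, Δ v.1 w * g w = 0 := by
      intro v
      have h := congrFun (hgker : lapIntHom Δ B ℤ g = 0) v
      simpa [lapIntHom, smul_eq_mul] using h
    rw [PhiHom, AddMonoidHom.comp_apply, QuotientAddGroup.mk'_apply,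
      QuotientAddGroup.eq_zero_iff]
    refine ⟨g, ?_⟩
    refine Prod.ext ?_ ?_
    · show (fun v : {v : Γ // v ∉ B} => ∑ w, Δ v.1 w * g w) = 0
      funext v
      exact hgk v
    · show (fun v : {v : Γ // v ∈ B} => ∑ w, (Δ v.1 w : ℝ) * (g w : ℝ)) =
        fun v : {v : Γ // v ∈ B} => ∑ w, (Δ v.1 w : ℝ) * f.1 w
      funext v
      exact Finset.sum_congr rfl (fun w _ => by rw [hc w])

end Main

/-- Lemma 1: if the sandpile group `G(Γ) = ℤ^Γ/Δ(ℤ^Γ)` is generated by the classes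
of the delta functions at boundary vertices, then the extended sandpile group
`G̃(Γ) = (ℤ^{Γ°} × ℝ^{∂Γ})/Δ̃(ℤ^Γ)` is isomorphic to `H_ℝ(Γ)/H_ℤ(Γ)`. -/
theorem extended_sandpile_iso_harmonic_quotient
    (Γ : Type) [Fintype Γ] [DecidableEq Γ] [Nonempty Γ]
    (Δ : Matrix Γ Γ ℤ) (B : Set Γ) (hΔ : Δ.det ≠ 0)
    (hgen : AddSubgroup.closure
      {x : (Γ → ℤ) ⧸ (lapHom Δ ℤ).range |
        ∃ v ∈ B, x = QuotientAddGroup.mk (Pi.single v (1 : ℤ))} = ⊤) :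
    Nonempty (((({v : Γ // v ∉ B} → ℤ) × ({v : Γ // v ∈ B} → ℝ)) ⧸ (extLap Δ B).range)
      ≃+ ((lapIntHom Δ B ℝ).ker ⧸
        (((intCastHom Γ).comp (lapIntHom Δ B ℤ).ker.subtype).range.addSubgroupOf
          (lapIntHom Δ B ℝ).ker))) := by
  have e := QuotientAddGroup.quotientKerEquivOfSurjective (PhiHom Δ B) (Phi_surj Δ B hΔ hgen)
  exact ⟨e.symm.trans (QuotientAddGroup.quotientAddEquivOfEq (Phi_ker Δ B hΔ))⟩
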